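/- Let R > 0 and z, ż ∈ ℂ with z ≠ 0. If (1+i)(2ż + (1+i)z) = 2z̄·[(1+i)²z² + 2(1+i)żz]/(R²+|z|²), then either |z| = R or 2ż = -(1+i)z. -/

import Mathlib

/-- The infinitesimal-generator dichotomy for asymptotic Möbius-loxodromic
solutions: either the orbit lies on the equator `|z| = R` or the loxodromic
velocity condition `2ż = -(1+i)z` holds. -/
theorem loxodromic_dichotomy (R : ℝ) (hR : 0 < R) (z zd : ℂ) (hz : z ≠ 0)
    (h : (1 + Complex.I) * (2 * zd + (1 + Complex.I) * z) =
      2 * (starRingEnd ℂ) z *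
        ((1 + Complex.I) ^ 2 * z ^ 2 + 2 * (1 + Complex.I) * zd * z) /
        ((R : ℂ) ^ 2 + (‖z‖ : ℂ) ^ 2)) :
    ‖z‖ = R ∨ 2 * zd = -(1 + Complex.I) * z := by
  have habs : (0:ℝ) < ‖z‖ := norm_pos_iff.mpr hz
  have hDre : (0:ℝ) < R ^ 2 + ‖z‖ ^ 2 := by positivity
  have hD : ((R : ℂ) ^ 2 + (‖z‖ : ℂ) ^ 2) ≠ 0 := by
    intro hc
    have : ((R ^ 2 + ‖z‖ ^ 2 : ℝ) : ℂ) = 0 := by push_cast; exact_mod_cast hc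
    exact absurd (Complex.ofReal_eq_zero.mp this) (ne_of_gt hDre)
  have hconj : (starRingEnd ℂ) z * z = ((‖z‖ : ℝ) : ℂ) ^ 2 := by
    rw [mul_comm, Complex.mul_conj]
    norm_cast
    exact (Complex.sq_norm z).symm
  have key : ((R : ℂ) ^ 2 - (‖z‖ : ℂ) ^ 2) *
      ((1 + Complex.I) * (2 * zd + (1 + Complex.I) * z)) = 0 := by
    have h' := h
    field_simp at h'
    linear_combination h' + 2*(1+Complex.I)*(2*zd+(1+Complex.I)*z)*hconj
  rcases mul_eq_zero.mp key with h1 | h2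
  · left
    have : ((R : ℂ) ^ 2) = (‖z‖ : ℂ) ^ 2 := by linear_combination h1
    have hr : (R:ℝ)^2 = ‖z‖ ^ 2 := by exact_mod_cast this
    nlinarith [habs, hR]
  · right
    have hI : (1 + Complex.I) ≠ 0 := by
      intro hc
      have := congrArg Complex.im hc
      simp at this
    rcases mul_eq_zero.mp h2 with hc | hc
    · exact absurd hc hI
    · linear_combination hc
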